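/- Let C' ≤ 1, b₀ > 0, τ ≥ 1, and D₂, γ₀ ∈ ℕ. There exists C depending only on C', D₂, γ₀, τ such that for every ε₀ ≤ C(1/(b₀+1))^{16γ₀D₂}, defining for k ≥ 1: ε_k = ε₀^{(5/2)^k}, γ_k = 2^k γ₀, r_k = 1/|log ε_{k−1}|², b_k = b_{k−1} + |log ε_{k−1}|⁴/C', and κ_k = C'/|log ε_k|^{4τ}, one has for every k: (i) 4/r_k ≤ |log ε_k|², and (ii) ((b_k+1)/(κ_k r_{k+1}))^{D₂γ_k} ε_k ≤ C'. -/

import Mathlib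

open scoped BigOperators
open MeasureTheory Matrix

noncomputable section

attribute [local instance] Matrix.linftyOpNormedAddCommGroup Matrix.linftyOpNormedSpace

/-- Iterated partial derivative with multi-index `α`. -/
def mpd {d : ℕ} {E : Type*} [NormedAddCommGroup E] [NormedSpace ℝ E]
    (α : Fin d → ℕ) (f : (Fin d → ℝ) → E) : (Fin d → ℝ) → E :=
  (List.finRange d).foldr
    (fun i g =>
      (fun (h : (Fin d → ℝ) → E) (θ : Fin d → ℝ) => fderiv ℝ h θ (Pi.single i 1))^[α i] g) f

/-- The quantity whose supremum over `p = (α, θ)` is the Gevrey-2 norm `‖f‖_r`. -/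
def gevreyQ {d : ℕ} {E : Type*} [NormedAddCommGroup E] [NormedSpace ℝ E]
    (r : ℝ) (f : (Fin d → ℝ) → E) (p : (Fin d → ℕ) × (Fin d → ℝ)) : ℝ :=
  r ^ (2 * ∑ i, p.1 i) / ((∏ i, Nat.factorial (p.1 i) : ℕ) : ℝ) ^ 2 * ‖mpd p.1 f p.2‖

/-- `‖f‖_r ≤ M`. -/
def GevreyLe {d : ℕ} {E : Type*} [NormedAddCommGroup E] [NormedSpace ℝ E]
    (r : ℝ) (f : (Fin d → ℝ) → E) (M : ℝ) : Prop :=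
  ∀ p, gevreyQ r f p ≤ M

/-- The Gevrey-2 norm of `f` is finite. -/
def GevreyFinite {d : ℕ} {E : Type*} [NormedAddCommGroup E] [NormedSpace ℝ E]
    (r : ℝ) (f : (Fin d → ℝ) → E) : Prop :=
  BddAbove (Set.range (gevreyQ r f))

/-- The Gevrey-2 norm `‖f‖_r`. -/
def gevreyNorm {d : ℕ} {E : Type*} [NormedAddCommGroup E] [NormedSpace ℝ E]
    (r : ℝ) (f : (Fin d → ℝ) → E) : ℝ :=
  ⨆ p, gevreyQ r f p

/-- `ℤ^d`-periodicity (function on the torus `𝕋^d`). -/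
def Per1 {d : ℕ} {E : Type*} (f : (Fin d → ℝ) → E) : Prop :=
  ∀ (θ : Fin d → ℝ) (k : Fin d → ℤ), f (θ + fun i => (k i : ℝ)) = f θ

/-- `2ℤ^d`-periodicity (function on the double torus `2𝕋^d`). -/
def Per2 {d : ℕ} {E : Type*} (f : (Fin d → ℝ) → E) : Prop :=
  ∀ (θ : Fin d → ℝ) (k : Fin d → ℤ), f (θ + fun i => 2 * (k i : ℝ)) = f θ

/-- The character `e^{2πi⟨m/2,θ⟩}` attached to the half-integer vector `m/2`, `m ∈ ℤ^d`. -/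
def eHalf {d : ℕ} (m : Fin d → ℤ) (θ : Fin d → ℝ) : ℂ :=
  Complex.exp ((2 * Real.pi * Complex.I) * ∑ i, ((m i : ℂ) / 2) * (θ i : ℂ))

/-- `|m/2| = |m₁|/2 + ⋯ + |m_d|/2` for a half-integer vector `m/2`. -/
def hnorm {d : ℕ} (m : Fin d → ℤ) : ℝ := (∑ i, |(m i : ℝ)|) / 2

/-- Fourier coefficient `f̂(m/2) = 2^{-d}∫_{[0,2]^d} f(θ)e^{-2πi⟨m/2,θ⟩}dθ`. -/
def fourierC {d n : ℕ} (f : (Fin d → ℝ) → Matrix (Fin n) (Fin n) ℂ) (m : Fin d → ℤ) :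
    Matrix (Fin n) (Fin n) ℂ :=
  ((2 : ℝ) ^ d)⁻¹ • ∫ θ in Set.Icc (0 : Fin d → ℝ) (fun _ => 2), eHalf (-m) θ • f θ

/-- Truncation of `f` at order `N`: `f^N = Σ_{|m|≤N} f̂(m)e^{2πi⟨m,·⟩}`. -/
def truncN {d n : ℕ} (N : ℕ) (f : (Fin d → ℝ) → Matrix (Fin n) (Fin n) ℂ) :
    (Fin d → ℝ) → Matrix (Fin n) (Fin n) ℂ :=
  fun θ => ∑ m ∈ (Finset.Icc (fun _ => -(2 * (N : ℤ))) (fun _ => (2 * (N : ℤ)))).filter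
      (fun m : Fin d → ℤ => hnorm m ≤ N),
    eHalf m θ • fourierC f m

/-- `ω` is Diophantine with constant `κ` and exponent `τ`. -/
def IsDioph {d : ℕ} (ω : Fin d → ℝ) (κ τ : ℝ) : Prop :=
  ∀ m : Fin d → ℤ, m ≠ 0 → κ / (∑ i, |(m i : ℝ)|) ^ τ ≤ |∑ i, (m i : ℝ) * ω i|

/-- `A` has `DC^N_ω(κ',τ)` spectrum. -/
def DCspec {d n : ℕ} (ω : Fin d → ℝ) (N : ℕ) (κ' τ : ℝ)
    (A : Matrix (Fin n) (Fin n) ℂ) : Prop :=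
  ∀ α ∈ spectrum ℂ A, ∀ β ∈ spectrum ℂ A, ∀ m : Fin d → ℤ, m ≠ 0 → hnorm m ≤ N →
    κ' / hnorm m ^ τ ≤
      ‖α - β - (2 * Real.pi * Complex.I) * ∑ i, ((m i : ℂ) / 2) * (ω i : ℂ)‖

/-- The trivial map `Φ(θ) = Σ_L e^{2πi⟨m_L,θ⟩}P_L` attached to a decomposition. -/
def PhiTriv {d n s : ℕ} (P : Fin s → Matrix (Fin n) (Fin n) ℂ)
    (m : Fin s → Fin d → ℤ) (θ : Fin d → ℝ) : Matrix (Fin n) (Fin n) ℂ :=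
  ∑ L, eHalf (m L) θ • P L

/-- `F` has good periodicity properties w.r.t. the decomposition `P` and the family `m`:
`Φ⁻¹FΦ` is `ℤ^d`-periodic. -/
def GoodPer {d n s : ℕ} (F : (Fin d → ℝ) → Matrix (Fin n) (Fin n) ℂ)
    (P : Fin s → Matrix (Fin n) (Fin n) ℂ) (m : Fin s → Fin d → ℤ) : Prop :=
  Per1 (fun θ => PhiTriv P (fun L => -(m L)) θ * F θ * PhiTriv P m θ)

/-- Directional derivative `∂_ω f`. -/
def dOm {d : ℕ} {E : Type*} [NormedAddCommGroup E] [NormedSpace ℝ E]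
    (ω : Fin d → ℝ) (f : (Fin d → ℝ) → E) (θ : Fin d → ℝ) : E :=
  fderiv ℝ f θ ω

set_option maxHeartbeats 1000000 in
/-- numerical lemma: with `ε_k = ε₀^{(5/2)^k}`, `γ_k = 2^kγ₀`,
`r_{k+1} = 1/|log ε_k|²`, `b_{k+1} = b_k + |log ε_k|⁴/C'`, `κ_k = C'/|log ε_k|^{4τ}`,
if `ε₀ ≤ C(1/(b₀+1))^{16γ₀D₂}` (with `C` depending only on `C', D₂, γ₀, τ`), then for all `k`:
`4/r_k ≤ |log ε_k|²` (for `k ≥ 1`) and `((b_k+1)/(κ_k r_{k+1}))^{D₂γ_k} ε_k ≤ C'`. -/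
theorem stmt_11 (C' b₀ τ : ℝ) (hC'0 : 0 < C') (hC' : C' ≤ 1) (hb₀ : 0 < b₀) (hτ : 1 ≤ τ)
    (D₂ γ₀ : ℕ) :
    ∃ C : ℝ, 0 < C ∧
    ∀ ε₀ : ℝ, 0 < ε₀ → ε₀ ≤ C * (1 / (b₀ + 1)) ^ (16 * γ₀ * D₂) →
    ∀ ε : ℕ → ℝ, (∀ k, ε k = ε₀ ^ ((5 / 2 : ℝ) ^ k)) →
    ∀ γ : ℕ → ℕ, (∀ k, γ k = 2 ^ k * γ₀) →
    ∀ rr : ℕ → ℝ, (∀ k, rr (k + 1) = 1 / |Real.log (ε k)| ^ 2) →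
    ∀ b : ℕ → ℝ, b 0 = b₀ → (∀ k, b (k + 1) = b k + |Real.log (ε k)| ^ 4 / C') →
    ∀ κs : ℕ → ℝ, (∀ k, κs k = C' / |Real.log (ε k)| ^ (4 * τ)) →
      (∀ k : ℕ, 1 ≤ k → 4 / rr k ≤ |Real.log (ε k)| ^ 2) ∧
      (∀ k : ℕ, ((b k + 1) / (κs k * rr (k + 1))) ^ (D₂ * γ k) * ε k ≤ C') := by
    classical
  have hb1 : (1:ℝ) ≤ b₀ + 1 := by linarith
  have hb0' : (0:ℝ) < b₀ + 1 := by linarith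
  set A : ℝ := (D₂ : ℝ) * (γ₀ : ℝ) + 1 with hAdef
  have hA1 : 1 ≤ A := by
    have h : (0:ℝ) ≤ (D₂ : ℝ) * (γ₀ : ℝ) := by positivity
    simp only [hAdef]; linarith
  clear_value A
  set B : ℝ := 2 * (b₀ + 1) / C' ^ 2 with hBdef
  have hB2 : 2 ≤ B := by
    rw [hBdef, le_div_iff₀ (by positivity)]
    nlinarith [sq_nonneg C']
  have hlogB : 0 < Real.log B := Real.log_pos (by linarith)
  clear_value B
  set T : ℝ := 20 * A * (4 * τ + 7) with hTdef
  have hT1 : 1 ≤ T := by nlinarith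
  clear_value T
  set L₀ : ℝ := max (max 1 (2 * (-Real.log C'))) (max (4 * A * Real.log B) (T ^ 5))
    with hL₀def
  clear_value L₀
  refine ⟨Real.exp (-L₀) * (b₀ + 1) ^ (16 * γ₀ * D₂), by positivity, ?_⟩
  intro ε₀ hε₀pos hε₀le ε hε γ hγ rr hrr b hb0 hbrec κs hκs
  have hε₀exp : ε₀ ≤ Real.exp (-L₀) := by
    have hEq : Real.exp (-L₀) * (b₀ + 1) ^ (16 * γ₀ * D₂) * (1 / (b₀ + 1)) ^ (16 * γ₀ * D₂)
        = Real.exp (-L₀) := by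
      rw [mul_assoc, ← mul_pow, mul_one_div, div_self (ne_of_gt hb0'), one_pow, mul_one]
    calc ε₀ ≤ _ := hε₀le
    _ = Real.exp (-L₀) := hEq
  set L : ℝ := -Real.log ε₀ with hLdef
  have hlogε₀ : Real.log ε₀ = -L := by rw [hLdef, neg_neg]
  have hLge : L₀ ≤ L := by
    have h1 : Real.log ε₀ ≤ -L₀ := by
      calc Real.log ε₀ ≤ Real.log (Real.exp (-L₀)) := Real.log_le_log hε₀pos hε₀exp
      _ = -L₀ := Real.log_exp _
    simp only [hLdef]; linarith
  clear_value L
  rw [hL₀def] at hLge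
  have hL1 : 1 ≤ L := le_trans (le_trans (le_max_left _ _) (le_max_left _ _)) hLge
  have hL0 : (0:ℝ) < L := lt_of_lt_of_le one_pos hL1
  have hLC' : 2 * (-Real.log C') ≤ L :=
    le_trans (le_trans (le_max_right _ _) (le_max_left _ _)) hLge
  have hLB : 4 * A * Real.log B ≤ L :=
    le_trans (le_trans (le_max_left _ _) (le_max_right _ _)) hLge
  have hLT : T ^ 5 ≤ L :=
    le_trans (le_trans (le_max_right _ _) (le_max_right _ _)) hLge
  set x : ℕ → ℝ := fun k => (5/2:ℝ) ^ k * L with hxdef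
  have hxval : ∀ k, x k = (5/2:ℝ) ^ k * L := fun k => rfl
  clear_value x
  have hpow1 : ∀ k : ℕ, (1:ℝ) ≤ (5/2:ℝ) ^ k := fun k => one_le_pow₀ (by norm_num)
  have hx1 : ∀ k, 1 ≤ x k := by
    intro k; rw [hxval]
    calc (1:ℝ) = 1 * 1 := (one_mul 1).symm
    _ ≤ (5/2:ℝ) ^ k * L := mul_le_mul (hpow1 k) hL1 zero_le_one (by positivity)
  have hxpos : ∀ k, 0 < x k := fun k => lt_of_lt_of_le one_pos (hx1 k)
  have hxL : ∀ k, L ≤ x k := by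
    intro k; rw [hxval]
    exact le_mul_of_one_le_left hL0.le (hpow1 k)
  have hlogε : ∀ k, Real.log (ε k) = -x k := by
    intro k
    rw [hε k, Real.log_rpow hε₀pos, hlogε₀, hxval]; ring
  have habs : ∀ k, |Real.log (ε k)| = x k := by
    intro k; rw [hlogε k, abs_neg, abs_of_pos (hxpos k)]
  have hxsucc : ∀ k, x (k+1) = 5/2 * x k := by
    intro k; rw [hxval, hxval, pow_succ]; ring
  constructor
  · -- part (i)
    intro k hk
    obtain ⟨j, rfl⟩ : ∃ j, k = j + 1 := ⟨k - 1, (Nat.succ_pred_eq_of_pos hk).symm⟩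
    rw [hrr j, habs j, habs (j+1), div_div_eq_mul_div, div_one, hxsucc j]
    nlinarith [sq_nonneg (x j)]
  · -- part (ii)
    intro k
    have hx := hx1 k
    have hx0 := hxpos k
    -- bounds on b
    have hbge : ∀ m, b₀ ≤ b m := by
      intro m; induction m with
      | zero => rw [hb0]
      | succ m ih =>
        rw [hbrec m]
        have h : 0 ≤ |Real.log (ε m)| ^ 4 / C' := by positivity
        linarith
    have hbub : ∀ m, b m ≤ b₀ + (m:ℝ) * (x m ^ 4 / C') := by
      intro m; induction m with
      | zero => simp [hb0]
      | succ m ih =>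
        rw [hbrec m, habs m]
        have hxm : x m ≤ x (m+1) := by
          rw [hxsucc m]; linarith [hxpos m]
        have h1 : x m ^ 4 / C' ≤ x (m+1) ^ 4 / C' := by
          gcongr
          exact (hxpos m).le
        have h2 : (m:ℝ) * (x m ^ 4 / C') ≤ (m:ℝ) * (x (m+1) ^ 4 / C') :=
          mul_le_mul_of_nonneg_left h1 (Nat.cast_nonneg m)
        push_cast
        linarith
    have hkx : (k:ℝ) ≤ x k := by
      have h2 : ((k:ℝ)) < 2 ^ k := by exact_mod_cast Nat.lt_two_pow_self (n := k)
      have h3 : (2:ℝ)^k ≤ (5/2:ℝ)^k := pow_le_pow_left₀ (by norm_num) (by norm_num) k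
      have h4 : (5/2:ℝ)^k ≤ (5/2:ℝ)^k * L := le_mul_of_one_le_right (by positivity) hL1
      rw [hxval]; linarith
    have hb_ub : b k + 1 ≤ (b₀ + 1) + x k ^ 5 / C' := by
      have h1 := hbub k
      have h5 : (k:ℝ) * (x k ^ 4 / C') ≤ x k * (x k ^ 4 / C') :=
        mul_le_mul_of_nonneg_right hkx (by positivity)
      have h6 : x k * (x k ^ 4 / C') = x k ^ 5 / C' := by ring
      linarith
    rw [hκs k, hrr k, habs k]
    set M : ℝ := (b k + 1) / (C' / x k ^ (4 * τ) * (1 / x k ^ 2)) with hMdef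
    clear_value M
    have hrp : 0 < x k ^ (4 * τ) := Real.rpow_pos_of_pos hx0 _
    have hC'ne : C' ≠ 0 := ne_of_gt hC'0
    have hxne : x k ≠ 0 := ne_of_gt hx0
    have hrpne : x k ^ (4 * τ) ≠ 0 := ne_of_gt hrp
    have hMeq : M = (b k + 1) * x k ^ (4*τ) * x k ^ 2 / C' := by
      rw [hMdef]
      field_simp
    have hbk1 : 1 ≤ b k + 1 := by linarith [hbge k]
    have hrp1 : 1 ≤ x k ^ (4*τ) := by
      have h := Real.rpow_le_rpow_of_exponent_le hx (show (0:ℝ) ≤ 4*τ by linarith)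
      rwa [Real.rpow_zero] at h
    have hsq1 : 1 ≤ x k ^ 2 := one_le_pow₀ hx
    have hM1 : 1 ≤ M := by
      rw [hMeq, le_div_iff₀ hC'0, one_mul]
      have p1 : 1 ≤ (b k + 1) * x k ^ (4*τ) := by
        calc (1:ℝ) = 1 * 1 := (one_mul 1).symm
        _ ≤ (b k + 1) * x k ^ (4*τ) := mul_le_mul hbk1 hrp1 zero_le_one (by linarith)
      have p2 : 1 ≤ (b k + 1) * x k ^ (4*τ) * x k ^ 2 := by
        calc (1:ℝ) = 1 * 1 := (one_mul 1).symm
        _ ≤ (b k + 1) * x k ^ (4*τ) * x k ^ 2 :=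
          mul_le_mul p1 hsq1 zero_le_one (le_trans zero_le_one p1)
      linarith
    have hMpos : 0 < M := lt_of_lt_of_le one_pos hM1
    have hMub : M ≤ B * (x k ^ (4*τ) * x k ^ 7) := by
      have h7 : 1 ≤ x k ^ 5 / C' := by
        rw [le_div_iff₀ hC'0, one_mul]
        linarith [one_le_pow₀ hx (n := 5)]
      have hq : b k + 1 ≤ 2 * (b₀+1) * (x k ^ 5 / C') := by
        have hu0 : (0:ℝ) ≤ x k ^ 5 / C' := by linarith
        have e1 : b₀ + 1 ≤ (b₀ + 1) * (x k ^ 5 / C') :=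
          le_mul_of_one_le_right (by linarith) h7
        have e2 : x k ^ 5 / C' ≤ (b₀ + 1) * (x k ^ 5 / C') :=
          le_mul_of_one_le_left hu0 hb1
        nlinarith [hb_ub, e1, e2]
      calc M = (b k + 1) * (x k ^ (4*τ) * x k ^ 2 / C') := by rw [hMeq]; ring
      _ ≤ (2*(b₀+1)*(x k ^ 5 / C')) * (x k ^ (4*τ) * x k ^ 2 / C') := by
          apply mul_le_mul_of_nonneg_right hq (by positivity)
      _ = B * (x k ^ (4*τ) * x k ^ 7) := by
          rw [hBdef]; field_simp
    have hlogM : Real.log M ≤ Real.log B + (4*τ+7) * Real.log (x k) := by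
      have hBpos : (0:ℝ) < B := by linarith
      calc Real.log M ≤ Real.log (B * (x k ^ (4*τ) * x k ^ 7)) := Real.log_le_log hMpos hMub
      _ = Real.log B + ((4*τ) * Real.log (x k) + 7 * Real.log (x k)) := by
          rw [Real.log_mul (ne_of_gt hBpos) (by positivity),
            Real.log_mul (ne_of_gt hrp) (by positivity), Real.log_rpow hx0, Real.log_pow]
          push_cast; ring
      _ = Real.log B + (4*τ+7) * Real.log (x k) := by ring
    have hL15 : (0:ℝ) < L ^ ((1:ℝ)/5) := Real.rpow_pos_of_pos hL0 _
    have hlogx : Real.log (x k) ≤ 5 * x k ^ ((1:ℝ)/5) := by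
      have h0 : (0:ℝ) < x k ^ ((1:ℝ)/5) := Real.rpow_pos_of_pos hx0 _
      have h1 : Real.log (x k ^ ((1:ℝ)/5)) ≤ x k ^ ((1:ℝ)/5) - 1 :=
        Real.log_le_sub_one_of_pos h0
      rw [Real.log_rpow hx0] at h1
      linarith
    have hn : ((D₂ * γ k : ℕ) : ℝ) ≤ A * 2 ^ k := by
      rw [hγ k, hAdef]; push_cast
      have h2 : (0:ℝ) ≤ 2 ^ k := by positivity
      calc (D₂:ℝ) * (2 ^ k * (γ₀:ℝ)) = ((D₂:ℝ) * (γ₀:ℝ)) * 2 ^ k := by ring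
      _ ≤ ((D₂:ℝ) * (γ₀:ℝ) + 1) * 2 ^ k :=
        mul_le_mul_of_nonneg_right (by linarith) h2
    have hc : (5/2:ℝ) ^ ((1:ℝ)/5) ≤ 5/4 := by
      have h5 : ((5/2:ℝ) ^ ((1:ℝ)/5)) ^ (5:ℕ) = 5/2 := by
        rw [← Real.rpow_natCast ((5/2:ℝ) ^ ((1:ℝ)/5)) 5, ← Real.rpow_mul (by norm_num)]
        norm_num
      by_contra h
      push_neg at h
      have h6 := pow_lt_pow_left₀ h (by norm_num : (0:ℝ) ≤ 5/4) (by norm_num : 5 ≠ 0)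
      rw [h5] at h6
      norm_num at h6
    have hxsplit : x k ^ ((1:ℝ)/5) = ((5/2:ℝ)^((1:ℝ)/5))^k * L ^ ((1:ℝ)/5) := by
      rw [hxval, Real.mul_rpow (by positivity) hL0.le]
      congr 1
      rw [← Real.rpow_natCast (5/2:ℝ) k, ← Real.rpow_mul (by norm_num),
        ← Real.rpow_natCast ((5/2:ℝ)^((1:ℝ)/5)) k, ← Real.rpow_mul (by norm_num)]
      rw [mul_comm]
    have hkc : (2:ℝ)^k * ((5/2:ℝ)^((1:ℝ)/5))^k ≤ (5/2:ℝ)^k := by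
      rw [← mul_pow]
      apply pow_le_pow_left₀ (by positivity) _ k
      linarith [hc]
    have hTle : T ≤ L ^ ((4:ℝ)/5) := by
      have h1 : T = (T ^ (5:ℕ)) ^ ((1:ℝ)/5) := by
        rw [← Real.rpow_natCast T 5, ← Real.rpow_mul (by linarith : (0:ℝ) ≤ T)]
        norm_num
      rw [h1]
      calc (T ^ (5:ℕ)) ^ ((1:ℝ)/5) ≤ L ^ ((1:ℝ)/5) :=
        Real.rpow_le_rpow (by positivity) hLT (by norm_num)
      _ ≤ L ^ ((4:ℝ)/5) := Real.rpow_le_rpow_of_exponent_le hL1 (by norm_num)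
    have hTL : T * L ^ ((1:ℝ)/5) ≤ L := by
      have h2 : L ^ ((4:ℝ)/5) * L ^ ((1:ℝ)/5) = L := by
        rw [← Real.rpow_add hL0]; norm_num
      calc T * L ^ ((1:ℝ)/5) ≤ L ^ ((4:ℝ)/5) * L ^ ((1:ℝ)/5) :=
        mul_le_mul_of_nonneg_right hTle hL15.le
      _ = L := h2
    have hkey : ((D₂ * γ k : ℕ) : ℝ) * Real.log M ≤ x k / 2 := by
      have hlogM0 : 0 ≤ Real.log M := Real.log_nonneg hM1
      have s1 : ((D₂ * γ k : ℕ) : ℝ) * Real.log M ≤ (A * 2^k) * Real.log M :=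
        mul_le_mul_of_nonneg_right hn hlogM0
      have s2 : Real.log M ≤ Real.log B + (4*τ+7) * (5 * x k ^ ((1:ℝ)/5)) := by
        have h := mul_le_mul_of_nonneg_left hlogx (show (0:ℝ) ≤ 4*τ+7 by linarith)
        linarith [hlogM]
      have hA2 : (0:ℝ) ≤ A * 2^k := mul_nonneg (by linarith) (by positivity)
      have ha : (A * 2^k) * Real.log B ≤ (5/2:ℝ)^k * L / 4 := by
        have h1 : A * Real.log B ≤ L / 4 := by linarith [hLB]
        have h2 : (2:ℝ)^k ≤ (5/2:ℝ)^k := pow_le_pow_left₀ (by norm_num) (by norm_num) k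
        calc (A * 2^k) * Real.log B = (2:ℝ)^k * (A * Real.log B) := by ring
        _ ≤ (5/2:ℝ)^k * (L/4) :=
          mul_le_mul h2 h1 (mul_nonneg (by linarith) hlogB.le) (by positivity)
        _ = (5/2:ℝ)^k * L / 4 := by ring
      have hb' : (A * 2^k) * ((4*τ+7) * (5 * x k ^ ((1:ℝ)/5))) ≤ (5/2:ℝ)^k * L / 4 := by
        rw [hxsplit]
        have h3 : (A * 2^k) * ((4*τ+7) * (5 * (((5/2:ℝ)^((1:ℝ)/5))^k * L ^ ((1:ℝ)/5))))
            = (T/4) * ((2:ℝ)^k * ((5/2:ℝ)^((1:ℝ)/5))^k) * L ^ ((1:ℝ)/5) := by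
          rw [hTdef]; ring
        rw [h3]
        have h4 : (T/4) * ((2:ℝ)^k * ((5/2:ℝ)^((1:ℝ)/5))^k) * L ^ ((1:ℝ)/5)
            ≤ (T/4) * (5/2:ℝ)^k * L ^ ((1:ℝ)/5) := by
          have h := mul_le_mul_of_nonneg_left hkc (show (0:ℝ) ≤ T/4 by linarith)
          exact mul_le_mul_of_nonneg_right (by linarith [h]) hL15.le
        have h5 : (T/4) * (5/2:ℝ)^k * L ^ ((1:ℝ)/5)
            = (5/2:ℝ)^k * (T * L ^ ((1:ℝ)/5)) / 4 := by ring
        have h6 : (5/2:ℝ)^k * (T * L ^ ((1:ℝ)/5)) / 4 ≤ (5/2:ℝ)^k * L / 4 := by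
          have h := mul_le_mul_of_nonneg_left hTL (show (0:ℝ) ≤ (5/2:ℝ)^k by positivity)
          linarith
        linarith [h4]
      have hx2 : x k / 2 = (5/2:ℝ)^k * L / 4 + (5/2:ℝ)^k * L / 4 := by
        rw [hxval]; ring
      calc ((D₂ * γ k : ℕ) : ℝ) * Real.log M ≤ (A * 2^k) * Real.log M := s1
      _ ≤ (A * 2^k) * (Real.log B + (4*τ+7) * (5 * x k ^ ((1:ℝ)/5))) :=
        mul_le_mul_of_nonneg_left s2 hA2
      _ = (A * 2^k) * Real.log B + (A * 2^k) * ((4*τ+7) * (5 * x k ^ ((1:ℝ)/5))) := by ring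
      _ ≤ (5/2:ℝ)^k * L / 4 + (5/2:ℝ)^k * L / 4 := add_le_add ha hb'
      _ = x k / 2 := hx2.symm
    have hεk : ε k = Real.exp (-x k) := by
      rw [hε k, Real.rpow_def_of_pos hε₀pos]
      congr 1
      rw [hlogε₀, hxval]; ring
    have hre : M ^ (D₂ * γ k) * ε k
        = Real.exp (((D₂ * γ k : ℕ) : ℝ) * Real.log M - x k) := by
      rw [hεk, ← Real.exp_log (pow_pos hMpos (D₂ * γ k)), ← Real.exp_add, Real.log_pow,
        sub_eq_add_neg]
    rw [hre]
    have hCge : Real.exp (-(x k / 2)) ≤ C' := by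
      rw [← Real.exp_log hC'0]
      apply Real.exp_le_exp.mpr
      have h := hxL k
      linarith [hLC']
    calc Real.exp (((D₂ * γ k : ℕ) : ℝ) * Real.log M - x k)
        ≤ Real.exp (x k / 2 - x k) := Real.exp_le_exp.mpr (by linarith [hkey])
    _ = Real.exp (-(x k / 2)) := by ring_nf
    _ ≤ C' := hCge
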